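/- For every integer k ≥ 1, the contact region of consecutive decahedra of the chain C_∞ contains a full two-dimensional disk: {p ∈ ℝ³ : p₁² + p₂² ≤ (2cos(π/5))² and p₃ = 3k} ⊆ D_k ∩ D_{k+1}. In particular consecutive decahedra of the chain meet in a set with nonempty relative interior in the plane {p₃ = 3k}. -/

import Mathlib

open Real

/-- The point `(x, y)` of the Euclidean plane. -/
noncomputable def pt2 (x y : ℝ) : EuclideanSpace ℝ (Fin 2) :=
  (WithLp.equiv 2 (Fin 2 → ℝ)).symm ![x, y]

/-- The point `(x, y, z)` of Euclidean three-space. -/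
noncomputable def pt3 (x y z : ℝ) : EuclideanSpace ℝ (Fin 3) :=
  (WithLp.equiv 2 (Fin 3 → ℝ)).symm ![x, y, z]

/-- The parity `r(k) = k mod 2`. -/
def par (k : ℕ) : ℕ := k % 2

/-- `Q a` is the regular pentagon (convex hull of its vertices) of circumradius 2
with vertex angles `(a + 2s)π/5`, `s = 0,…,4`. -/
noncomputable def Q (a : ℕ) : Set (EuclideanSpace ℝ (Fin 2)) :=
  convexHull ℝ {q | ∃ s : Fin 5,
    q = pt2 (2 * cos (((a : ℝ) + 2 * (s : ℝ)) * π / 5))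
            (2 * sin (((a : ℝ) + 2 * (s : ℝ)) * π / 5))}

/-- The 20-point vertex set of the `k`-th decahedron of the chain `C∞`. -/
noncomputable def V (k : ℕ) : Set (EuclideanSpace ℝ (Fin 3)) :=
  {p | ∃ s : Fin 5, ∃ t : Fin 4,
    p = pt3 (2 * cos (((par k : ℝ) + 2 * (s : ℝ)) * π / 5))
            (2 * sin (((par k : ℝ) + 2 * (s : ℝ)) * π / 5))
            (3 * ((k : ℝ) - 1) + (t : ℝ))}

/-- The `k`-th decahedron of the chain `C∞`. -/
noncomputable def D (k : ℕ) : Set (EuclideanSpace ℝ (Fin 3)) :=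
  convexHull ℝ (V k)

/-- Some pentagon direction is within `π/5` of any given direction `u`. -/
lemma exists_close (a u : ℝ) : ∃ s : Fin 5, cos (π/5) ≤ cos ((a + 2*(s:ℝ)) * π / 5 - u) := by
  have hπ := Real.pi_pos
  set z : ℝ := (5*u/π - a)/2 with hz
  set m : ℤ := round z with hm
  have hms : (0:ℤ) ≤ m % 5 := Int.emod_nonneg m (by norm_num)
  have hms5 : m % 5 < 5 := Int.emod_lt_of_pos m (by norm_num)
  refine ⟨⟨(m % 5).toNat, by omega⟩, ?_⟩
  have hsc : (((m % 5).toNat : ℕ) : ℝ) = ((m % 5 : ℤ) : ℝ) := by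
    exact_mod_cast Int.toNat_of_nonneg hms
  have hdecomp : (a + 2*(((m % 5).toNat : ℕ):ℝ)) * π / 5 - u
      = ((a + 2*(m:ℝ)) * π / 5 - u) - (m / 5 : ℤ) * (2 * π) := by
    rw [hsc]
    have : ((m % 5 : ℤ) : ℝ) = (m : ℝ) - 5 * ((m / 5 : ℤ) : ℝ) := by
      have h := Int.emod_add_mul_ediv m 5
      have h2 : ((m % 5 + 5 * (m / 5) : ℤ) : ℝ) = ((m : ℤ) : ℝ) := by rw [h]
      push_cast at h2
      linarith
    rw [this]; ring
  simp only [Fin.val_mk]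
  rw [hdecomp, Real.cos_sub_int_mul_two_pi]
  have hw : (a + 2*(m:ℝ)) * π / 5 - u = (2*π/5) * ((m:ℝ) - z) := by
    rw [hz]; field_simp; ring
  have habs : |(a + 2*(m:ℝ)) * π / 5 - u| ≤ π/5 := by
    rw [hw, abs_mul, abs_of_nonneg (by positivity : (0:ℝ) ≤ 2*π/5)]
    have h1 : |(m:ℝ) - z| ≤ 1/2 := by
      have := abs_sub_round z
      rw [abs_sub_comm] at this; exact this
    nlinarith [abs_nonneg ((m:ℝ) - z)]
  calc cos (π/5) ≤ cos |(a + 2*(m:ℝ)) * π / 5 - u| := by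
        apply Real.cos_le_cos_of_nonneg_of_le_pi (abs_nonneg _) (by linarith) habs
    _ = cos ((a + 2*(m:ℝ)) * π / 5 - u) := Real.cos_abs _

/-- Key support estimate: some pentagon vertex has at least the inner product
the disk point has, against any linear functional. -/
lemma key (a y₀ y₁ p₀ p₁ : ℝ) (h : p₀^2 + p₁^2 ≤ (2 * cos (π/5))^2) :
    ∃ s : Fin 5, y₀ * p₀ + y₁ * p₁ ≤
      y₀ * (2 * cos ((a + 2*(s:ℝ)) * π / 5)) + y₁ * (2 * sin ((a + 2*(s:ℝ)) * π / 5)) := by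
  have hc5 : 0 < cos (π/5) := Real.cos_pos_of_mem_Ioo
    ⟨by linarith [Real.pi_pos], by linarith [Real.pi_pos]⟩
  by_cases hy : y₀ = 0 ∧ y₁ = 0
  · exact ⟨0, by simp [hy.1, hy.2]⟩
  have hz : (⟨y₀, y₁⟩ : ℂ) ≠ 0 := by
    simp only [ne_eq, Complex.ext_iff, Complex.zero_re, Complex.zero_im]; tauto
  set Y : ℝ := ‖(⟨y₀, y₁⟩ : ℂ)‖ with hYdef
  have hY0 : 0 < Y := norm_pos_iff.mpr hz
  set u : ℝ := Complex.arg ⟨y₀, y₁⟩ with hu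
  have hcos : cos u = y₀ / Y := Complex.cos_arg hz
  have hsin : sin u = y₁ / Y := Complex.sin_arg _
  obtain ⟨s, hs⟩ := exists_close a u
  refine ⟨s, ?_⟩
  set θ : ℝ := (a + 2*(s:ℝ)) * π / 5 with hθ
  have hcs : y₀ * cos θ + y₁ * sin θ = Y * cos (θ - u) := by
    rw [Real.cos_sub, hcos, hsin]; field_simp
  -- Cauchy–Schwarz: y₀p₀+y₁p₁ ≤ Y * 2cos(π/5)
  have hY2 : Y^2 = y₀^2 + y₁^2 := by
    rw [hYdef, Complex.sq_norm, Complex.normSq_mk]; ring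
  have hCS : y₀ * p₀ + y₁ * p₁ ≤ Y * (2 * cos (π/5)) := by
    nlinarith [sq_nonneg (y₀*p₁ - y₁*p₀), sq_nonneg (Y * (2*cos (π/5)) - (y₀*p₀ + y₁*p₁)),
      mul_pos hY0 (by positivity : (0:ℝ) < 2 * cos (π/5))]
  have : Y * (2 * cos (π/5)) ≤ Y * (2 * cos (θ - u)) := by
    have := hs; nlinarith
  calc y₀ * p₀ + y₁ * p₁ ≤ Y * (2 * cos (π/5)) := hCS
    _ ≤ Y * (2 * cos (θ - u)) := this
    _ = 2 * (y₀ * cos θ + y₁ * sin θ) := by rw [hcs]; ring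
    _ = y₀ * (2 * cos θ) + y₁ * (2 * sin θ) := by ring

lemma pt3_decomp (x y z : ℝ) :
    pt3 x y z = x • EuclideanSpace.single (0 : Fin 3) (1:ℝ)
      + y • EuclideanSpace.single (1 : Fin 3) (1:ℝ)
      + z • EuclideanSpace.single (2 : Fin 3) (1:ℝ) := by
  ext i
  fin_cases i <;>
    simp [pt3, EuclideanSpace.single_apply, WithLp.equiv_symm_apply, PiLp.toLp_apply]

lemma euclid_decomp (p : EuclideanSpace ℝ (Fin 3)) :
    p = (p 0) • EuclideanSpace.single (0 : Fin 3) (1:ℝ)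
      + (p 1) • EuclideanSpace.single (1 : Fin 3) (1:ℝ)
      + (p 2) • EuclideanSpace.single (2 : Fin 3) (1:ℝ) := by
  ext i
  fin_cases i <;> simp [EuclideanSpace.single_apply]

lemma V_finite (k : ℕ) : (V k).Finite := by
  apply Set.Finite.subset (Set.finite_range
    (fun st : Fin 5 × Fin 4 => pt3 (2 * cos (((par k : ℝ) + 2 * (st.1 : ℝ)) * π / 5))
      (2 * sin (((par k : ℝ) + 2 * (st.1 : ℝ)) * π / 5)) (3 * ((k : ℝ) - 1) + (st.2 : ℝ))))
  rintro p ⟨s, t, rfl⟩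
  exact ⟨(s, t), rfl⟩

lemma mem_D_of (m : ℕ) (p : EuclideanSpace ℝ (Fin 3)) (t : Fin 4)
    (hball : (p 0)^2 + (p 1)^2 ≤ (2 * cos (π/5))^2)
    (hz : p 2 = 3 * ((m : ℝ) - 1) + (t : ℝ)) : p ∈ D m := by
  by_contra hnot
  obtain ⟨f, u, hfu, hup⟩ := geometric_hahn_banach_closed_point
    (convex_convexHull ℝ (V m)) ((V_finite m).isClosed_convexHull ℝ) hnot
  obtain ⟨s, hs⟩ := key ((par m : ℝ)) (f (EuclideanSpace.single (0:Fin 3) 1))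
    (f (EuclideanSpace.single (1:Fin 3) 1)) (p 0) (p 1) hball
  set θ : ℝ := ((par m : ℝ) + 2*(s:ℝ)) * π / 5 with hθ
  have hv : pt3 (2 * cos θ) (2 * sin θ) (3 * ((m:ℝ) - 1) + (t:ℝ)) ∈ D m :=
    subset_convexHull ℝ (V m) ⟨s, t, by rw [hθ]⟩
  have h1 := hfu _ hv
  rw [pt3_decomp] at h1
  simp only [map_add, map_smul, smul_eq_mul] at h1
  have h2 : f p = (p 0) * f (EuclideanSpace.single (0:Fin 3) 1)
      + (p 1) * f (EuclideanSpace.single (1:Fin 3) 1)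
      + (p 2) * f (EuclideanSpace.single (2:Fin 3) 1) := by
    conv_lhs => rw [euclid_decomp p]
    simp [map_add, map_smul]
  rw [h2, hz] at hup
  nlinarith [hs]

/-- Consecutive decahedra of the chain `C∞` meet in a full two-dimensional
disk of radius `2 cos (π/5)` at height `3k`. -/
theorem chain_contact_contains_disk (k : ℕ) (hk : 1 ≤ k) :
    {p : EuclideanSpace ℝ (Fin 3) |
        (p 0) ^ 2 + (p 1) ^ 2 ≤ (2 * cos (π / 5)) ^ 2 ∧ p 2 = 3 * (k : ℝ)} ⊆
      D k ∩ D (k + 1) := by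
  rintro p ⟨hball, hz⟩
  constructor
  · exact mem_D_of k p ⟨3, by norm_num⟩ hball (by rw [hz]; norm_num; ring)
  · exact mem_D_of (k+1) p ⟨0, by norm_num⟩ hball (by rw [hz]; push_cast; ring)
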